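/- arXiv:1104.5644 — 3 statements merged into one kernel-verified Lean document; each statement's English description precedes it below -/
import Mathlib

section
/- Let Y be a symmetric positive definite g×g real matrix, defining the norm ‖x‖_Y = √(xᵀYx) on ℝ^g. Let λ₁(Y⁻¹) = min_{m ∈ ℤ^g \ {0}} ‖m‖_{Y⁻¹} be the first minimum of Y⁻¹ and μ(Y) = max_{x ∈ ℝ^g} min_{m ∈ ℤ^g} ‖x - m‖_Y be the inhomogeneous minimum (covering radius) of Y. Then 2·μ(Y)·λ₁(Y⁻¹) ≥ 1. -/
open MeasureTheory Real Matrix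

noncomputable def coeZ {g : ℕ} (m : Fin g → ℤ) : Fin g → ℝ := fun i => (m i : ℝ)

noncomputable def normY {g : ℕ} (Y : Matrix (Fin g) (Fin g) ℝ) (x : Fin g → ℝ) : ℝ :=
  Real.sqrt (x ⬝ᵥ Y.mulVec x)

noncomputable def psi {g : ℕ} (Y : Matrix (Fin g) (Fin g) ℝ) (x : Fin g → ℝ) : ℝ :=
  ⨅ m : Fin g → ℤ, normY Y (x - coeZ m)

noncomputable def mu {g : ℕ} (Y : Matrix (Fin g) (Fin g) ℝ) : ℝ :=
  ⨆ x : Fin g → ℝ, psi Y x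

noncomputable def lam1 {g : ℕ} (Y : Matrix (Fin g) (Fin g) ℝ) : ℝ :=
  ⨅ m : {m : Fin g → ℤ // m ≠ 0}, normY Y (coeZ (m : Fin g → ℤ))

lemma normY_nonneg {g : ℕ} (Y : Matrix (Fin g) (Fin g) ℝ) (x : Fin g → ℝ) :
    0 ≤ normY Y x := Real.sqrt_nonneg _

/-- Cauchy–Schwarz for a symmetric positive definite form. -/
lemma cs_aux {g : ℕ} {Y : Matrix (Fin g) (Fin g) ℝ} (hY : Y.PosDef)
    (u v : Fin g → ℝ) : |u ⬝ᵥ Y.mulVec v| ≤ normY Y u * normY Y v := by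
  have hsym : ∀ a b : Fin g → ℝ, a ⬝ᵥ Y.mulVec b = b ⬝ᵥ Y.mulVec a := by
    intro a b
    have hH : Yᵀ = Y := hY.1
    calc a ⬝ᵥ Y.mulVec b = (Yᵀ *ᵥ a) ⬝ᵥ b := by
          rw [Matrix.dotProduct_mulVec, Matrix.mulVec_transpose]
      _ = b ⬝ᵥ Y.mulVec a := by rw [hH, dotProduct_comm]
  have hnn : ∀ z : Fin g → ℝ, 0 ≤ z ⬝ᵥ Y.mulVec z := by
    intro z
    simpa using hY.posSemidef.dotProduct_mulVec_nonneg z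
  set A := v ⬝ᵥ Y.mulVec v with hA
  set B := u ⬝ᵥ Y.mulVec v with hB
  set C := u ⬝ᵥ Y.mulVec u with hC
  have hd : discrim A (2 * B) C ≤ 0 := by
    apply discrim_le_zero
    intro t
    have := hnn (u + t • v)
    have hexp : (u + t • v) ⬝ᵥ Y.mulVec (u + t • v)
        = A * (t * t) + 2 * B * t + C := by
      have h1 : v ⬝ᵥ Y.mulVec u = B := (hsym v u).trans rfl
      simp only [Matrix.mulVec_add, Matrix.mulVec_smul, add_dotProduct,
        smul_dotProduct, dotProduct_add, dotProduct_smul, smul_eq_mul, ← hA, ← hB, ← hC, h1]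
      ring
    linarith [hexp ▸ this]
  have hBsq : B ^ 2 ≤ C * A := by
    rw [discrim] at hd; nlinarith
  have : |B| = Real.sqrt (B ^ 2) := by rw [Real.sqrt_sq_eq_abs]
  rw [this]
  calc Real.sqrt (B ^ 2) ≤ Real.sqrt (C * A) := Real.sqrt_le_sqrt hBsq
    _ = Real.sqrt C * Real.sqrt A := Real.sqrt_mul (hnn u) _
    _ = normY Y u * normY Y v := rfl

lemma key_cs {g : ℕ} {Y : Matrix (Fin g) (Fin g) ℝ} (hY : Y.PosDef) (hsymm : Y.IsSymm)
    (a z : Fin g → ℝ) : |a ⬝ᵥ z| ≤ normY Y⁻¹ a * normY Y z := by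
  have hdet : IsUnit Y.det := isUnit_iff_ne_zero.mpr (ne_of_gt hY.det_pos)
  have hinvsymm : Y⁻¹ᵀ = Y⁻¹ := by
    rw [Matrix.transpose_nonsing_inv, hsymm]
  have hYT : Yᵀ = Y := hsymm
  have h1 : (Y⁻¹ *ᵥ a) ⬝ᵥ Y.mulVec z = a ⬝ᵥ z := by
    rw [Matrix.dotProduct_mulVec, ← Matrix.mulVec_transpose, hYT,
      Matrix.mulVec_mulVec, Matrix.mul_nonsing_inv Y hdet, Matrix.one_mulVec]
  have h2 : (Y⁻¹ *ᵥ a) ⬝ᵥ Y.mulVec (Y⁻¹ *ᵥ a) = a ⬝ᵥ Y⁻¹.mulVec a := by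
    rw [Matrix.mulVec_mulVec, Matrix.mul_nonsing_inv Y hdet, Matrix.one_mulVec,
      dotProduct_comm]
  have := cs_aux hY (Y⁻¹ *ᵥ a) z
  rw [h1] at this
  have hnorm : normY Y (Y⁻¹ *ᵥ a) = normY Y⁻¹ a := by rw [normY, h2]; rfl
  rwa [hnorm] at this

theorem matrix_lemma_covering_radius {g : ℕ} (hg : 1 ≤ g)
    (Y : Matrix (Fin g) (Fin g) ℝ) (hsymm : Y.IsSymm) (hY : Y.PosDef) :
    1 ≤ 2 * mu Y * lam1 Y⁻¹ := by
  have hYinv : (Y⁻¹).PosDef := hY.inv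
  -- psi is bounded above
  set S := ∑ i, ∑ j, |Y i j| with hS
  have hpsi_bdd : ∀ x : Fin g → ℝ, psi Y x ≤ Real.sqrt S := by
    intro x
    have hbb : BddBelow (Set.range fun n : Fin g → ℤ => normY Y (x - coeZ n)) :=
      ⟨0, by rintro r ⟨n, rfl⟩; exact normY_nonneg _ _⟩
    have hle : psi Y x ≤ normY Y (x - coeZ (fun i => ⌊x i⌋)) := ciInf_le hbb _
    refine hle.trans ?_
    set z : Fin g → ℝ := x - coeZ (fun i => ⌊x i⌋) with hz
    have hz1 : ∀ i, |z i| ≤ 1 := by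
      intro i
      have hzi : z i = Int.fract (x i) := rfl
      rw [hzi, abs_of_nonneg (Int.fract_nonneg _)]
      exact (Int.fract_lt_one _).le
    apply Real.sqrt_le_sqrt
    calc z ⬝ᵥ Y.mulVec z = ∑ i, ∑ j, z i * (Y i j * z j) := by
          simp [dotProduct, Matrix.mulVec, Finset.mul_sum]
      _ ≤ S := by
          rw [hS]
          refine Finset.sum_le_sum fun i _ => Finset.sum_le_sum fun j _ => ?_
          calc z i * (Y i j * z j) ≤ |z i * (Y i j * z j)| := le_abs_self _
            _ = |z i| * |Y i j| * |z j| := by rw [abs_mul, abs_mul]; ring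
            _ ≤ 1 * |Y i j| * 1 := by
                have := hz1 i; have := hz1 j
                gcongr <;> positivity
            _ = |Y i j| := by ring
  have mubdd : BddAbove (Set.range (psi Y)) :=
    ⟨Real.sqrt S, by rintro r ⟨x, rfl⟩; exact hpsi_bdd x⟩
  -- key estimate for each nonzero integer vector
  have key : ∀ m : Fin g → ℤ, m ≠ 0 →
      0 < normY Y⁻¹ (coeZ m) ∧ 1 / (2 * normY Y⁻¹ (coeZ m)) ≤ mu Y := by
    intro m hm
    set a := coeZ m with haa
    have ha : a ≠ 0 := by
      intro h
      apply hm
      funext i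
      have := congrFun h i
      simpa [haa, coeZ] using this
    set Q : ℝ := a ⬝ᵥ Y⁻¹.mulVec a with hQdef
    have hQ : 0 < Q := by simpa [hQdef] using hYinv.dotProduct_mulVec_pos ha
    have hL : 0 < normY Y⁻¹ a := Real.sqrt_pos.mpr hQ
    set x : Fin g → ℝ := (1 / (2 * Q)) • (Y⁻¹ *ᵥ a) with hx
    have hax : a ⬝ᵥ x = 1 / 2 := by
      rw [hx, dotProduct_smul, smul_eq_mul, ← hQdef]
      field_simp
    have hlow : 1 / (2 * normY Y⁻¹ a) ≤ psi Y x := by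
      apply le_ciInf
      intro n
      have hdot : a ⬝ᵥ (x - coeZ n) = 1 / 2 - ((m ⬝ᵥ n : ℤ) : ℝ) := by
        rw [sub_eq_add_neg, dotProduct_add, hax, dotProduct_neg]
        congr 1
        push_cast [haa, coeZ, dotProduct]
        rfl
      have habs : (1 : ℝ) / 2 ≤ |a ⬝ᵥ (x - coeZ n)| := by
        rw [hdot]
        set k := (m ⬝ᵥ n : ℤ) with hk
        rcases le_or_gt k 0 with h | h
        · have hkr : (k : ℝ) ≤ 0 := by exact_mod_cast h
          rw [abs_of_nonneg (by linarith)]; linarith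
        · have hkr : (1 : ℝ) ≤ (k : ℝ) := by exact_mod_cast h
          rw [abs_of_nonpos (by linarith)]; linarith
      have hcs := key_cs hY hsymm a (x - coeZ n)
      have h2 : 1 / 2 ≤ normY Y⁻¹ a * normY Y (x - coeZ n) := le_trans habs hcs
      rw [div_le_iff₀ (by positivity)]
      nlinarith [normY_nonneg Y (x - coeZ n)]
    exact ⟨hL, hlow.trans (le_ciSup mubdd x)⟩
  -- mu is positive
  set m0 : Fin g → ℤ := Pi.single (⟨0, hg⟩ : Fin g) 1 with hm0def
  have hm0 : m0 ≠ 0 := by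
    intro h
    have := congrFun h (⟨0, hg⟩ : Fin g)
    simp [hm0def, Pi.single_apply] at this
  obtain ⟨hL0, hmu0⟩ := key m0 hm0
  have hmupos : 0 < mu Y := lt_of_lt_of_le (by positivity) hmu0
  haveI : Nonempty {m : Fin g → ℤ // m ≠ 0} := ⟨⟨m0, hm0⟩⟩
  have hlam : 1 / (2 * mu Y) ≤ lam1 Y⁻¹ := by
    apply le_ciInf
    rintro ⟨m, hm⟩
    obtain ⟨hL, hle⟩ := key m hm
    rw [div_le_iff₀ (by positivity)]
    have h1 : 1 ≤ mu Y * (2 * normY Y⁻¹ (coeZ m)) := (div_le_iff₀ (by positivity)).mp hle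
    nlinarith
  have h2 : 0 < 2 * mu Y := by positivity
  calc (1 : ℝ) = 2 * mu Y * (1 / (2 * mu Y)) := by field_simp
    _ ≤ 2 * mu Y * lam1 Y⁻¹ := by
        exact mul_le_mul_of_nonneg_left hlam h2.le
end

section
/- Let Y be a symmetric positive definite g×g real matrix with associated norm ‖·‖_Y, and let ψ(x) = min_{m ∈ ℤ^g} ‖x - m‖_Y. For any y ∈ ℝ^g whose supremum μ(Y) of ψ is attained at y, and for every x ∈ ℝ^g, one has 2ψ(x)² + 2ψ(x - y)² ≥ μ(Y)² + ψ(2x - y)². -/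
open MeasureTheory Real Matrix

lemma quad_nonneg {g : ℕ} {Y : Matrix (Fin g) (Fin g) ℝ} (hY : Y.PosDef)
    (v : Fin g → ℝ) : 0 ≤ v ⬝ᵥ Y.mulVec v := by
  have := hY.posSemidef.re_dotProduct_nonneg v
  simpa using this

lemma sq_normY {g : ℕ} {Y : Matrix (Fin g) (Fin g) ℝ} (hY : Y.PosDef)
    (v : Fin g → ℝ) : normY Y v ^ 2 = v ⬝ᵥ Y.mulVec v :=
  Real.sq_sqrt (quad_nonneg hY v)

lemma bddBelow_normY {g : ℕ} (Y : Matrix (Fin g) (Fin g) ℝ) (v : Fin g → ℝ) :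
    BddBelow (Set.range fun m : Fin g → ℤ => normY Y (v - coeZ m)) := by
  refine ⟨0, ?_⟩
  rintro _ ⟨m, rfl⟩
  exact Real.sqrt_nonneg _

lemma psi_le {g : ℕ} (Y : Matrix (Fin g) (Fin g) ℝ) (v : Fin g → ℝ) (m : Fin g → ℤ) :
    psi Y v ≤ normY Y (v - coeZ m) := ciInf_le (bddBelow_normY Y v) m

lemma psi_nonneg {g : ℕ} (Y : Matrix (Fin g) (Fin g) ℝ) (v : Fin g → ℝ) :
    0 ≤ psi Y v := le_ciInf fun _ => Real.sqrt_nonneg _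

lemma qpara {g : ℕ} {Y : Matrix (Fin g) (Fin g) ℝ} (hY : Y.PosDef) (a b : Fin g → ℝ) :
    normY Y (a + b) ^ 2 + normY Y (a - b) ^ 2 = 2 * normY Y a ^ 2 + 2 * normY Y b ^ 2 := by
  rw [sq_normY hY, sq_normY hY, sq_normY hY, sq_normY hY]
  simp only [Matrix.mulVec_add, Matrix.mulVec_sub, dotProduct_add, dotProduct_sub,
    add_dotProduct, sub_dotProduct]
  ring

theorem psi_parallelogram {g : ℕ} (Y : Matrix (Fin g) (Fin g) ℝ)
    (hsymm : Y.IsSymm) (hY : Y.PosDef) (y : Fin g → ℝ) (hy : psi Y y = mu Y)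
    (x : Fin g → ℝ) :
    mu Y ^ 2 + psi Y (2 • x - y) ^ 2 ≤ 2 * psi Y x ^ 2 + 2 * psi Y (x - y) ^ 2 := by
  have key : ∀ ε : ℝ, 0 < ε →
      mu Y ^ 2 + psi Y (2 • x - y) ^ 2 ≤
        2 * (psi Y x + ε) ^ 2 + 2 * (psi Y (x - y) + ε) ^ 2 := by
    intro ε hε
    obtain ⟨m, hm⟩ : ∃ m : Fin g → ℤ, normY Y (x - coeZ m) < psi Y x + ε :=
      exists_lt_of_ciInf_lt (lt_add_of_pos_right _ hε)
    obtain ⟨n, hn⟩ : ∃ n : Fin g → ℤ, normY Y (x - y - coeZ n) < psi Y (x - y) + ε :=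
      exists_lt_of_ciInf_lt (lt_add_of_pos_right _ hε)
    set a := x - coeZ m with ha
    set b := x - y - coeZ n with hb
    have veq1 : (2 • x - y) - coeZ (m + n) = a + b := by
      funext i
      simp [ha, hb, coeZ, two_smul]
      push_cast
      ring
    have veq2 : y - coeZ (m - n) = a - b := by
      funext i
      simp [ha, hb, coeZ]
      push_cast
      ring
    have h1 : mu Y ≤ normY Y (a - b) := by
      rw [← veq2, ← hy]
      exact psi_le Y y (m - n)
    have h2 : psi Y (2 • x - y) ≤ normY Y (a + b) := by
      rw [← veq1]
      exact psi_le Y _ (m + n)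
    have hmu0 : 0 ≤ mu Y := hy ▸ psi_nonneg Y y
    have hpsi0 : 0 ≤ psi Y (2 • x - y) := psi_nonneg Y _
    have step1 : mu Y ^ 2 + psi Y (2 • x - y) ^ 2 ≤
        normY Y (a - b) ^ 2 + normY Y (a + b) ^ 2 :=
      add_le_add (pow_le_pow_left₀ hmu0 h1 2) (pow_le_pow_left₀ hpsi0 h2 2)
    have step2 : normY Y (a - b) ^ 2 + normY Y (a + b) ^ 2 =
        2 * normY Y a ^ 2 + 2 * normY Y b ^ 2 := by
      rw [add_comm]; exact qpara hY a b
    have step3 : 2 * normY Y a ^ 2 + 2 * normY Y b ^ 2 ≤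
        2 * (psi Y x + ε) ^ 2 + 2 * (psi Y (x - y) + ε) ^ 2 := by
      have hA := pow_le_pow_left₀ (normY_nonneg Y a) hm.le 2
      have hB := pow_le_pow_left₀ (normY_nonneg Y b) hn.le 2
      linarith
    linarith
  have hc : Filter.Tendsto
      (fun ε : ℝ => 2 * (psi Y x + ε) ^ 2 + 2 * (psi Y (x - y) + ε) ^ 2)
      (nhdsWithin 0 (Set.Ioi 0))
      (nhds (2 * psi Y x ^ 2 + 2 * psi Y (x - y) ^ 2)) := by
    have hcont : Continuous
        (fun ε : ℝ => 2 * (psi Y x + ε) ^ 2 + 2 * (psi Y (x - y) + ε) ^ 2) := by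
      continuity
    have h0 := hcont.tendsto 0
    simp only [add_zero] at h0
    exact h0.mono_left nhdsWithin_le_nhds
  exact ge_of_tendsto hc (Filter.eventually_of_mem self_mem_nhdsWithin
    fun ε hε => key ε hε)
end

section
/- Let Y be a symmetric positive definite g×g real matrix with norm ‖·‖_Y and ψ(x) = min_{m ∈ ℤ^g} ‖x - m‖_Y. Define f_Y(t,x) = √(det Y) · Σ_{m ∈ ℤ^g} exp(-π t ‖x - m‖_Y²). Then for each fixed x ∈ ℝ^g, the function t ↦ f_Y(t,x) · exp(π t ψ(x)²) is nonincreasing on (0, ∞). -/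
open MeasureTheory Real Matrix

noncomputable def fY {g : ℕ} (Y : Matrix (Fin g) (Fin g) ℝ) (t : ℝ) (x : Fin g → ℝ) : ℝ :=
  Real.sqrt Y.det * ∑' m : Fin g → ℤ, Real.exp (-π * t * normY Y (x - coeZ m) ^ 2)

/-- A positive definite quadratic form is bounded below by a positive multiple of the
sum of squares. -/
lemma quadform_lower {g : ℕ} (hg : 1 ≤ g) (Y : Matrix (Fin g) (Fin g) ℝ) (hY : Y.PosDef) :
    ∃ c > 0, ∀ v : Fin g → ℝ, c * ∑ i, v i ^ 2 ≤ v ⬝ᵥ Y.mulVec v := by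
  set Q : (Fin g → ℝ) → ℝ := fun v => v ⬝ᵥ Y.mulVec v with hQ
  have hQcont : Continuous Q := by
    unfold Q
    simp only [dotProduct, mulVec]
    exact continuous_finset_sum _ fun i _ => (continuous_apply i).mul
      (continuous_finset_sum _ fun j _ => continuous_const.mul (continuous_apply j))
  set S : Set (Fin g → ℝ) := {v | ∑ i, v i ^ 2 = 1} with hS
  have hSclosed : IsClosed S :=
    isClosed_eq (continuous_finset_sum _ fun i _ => (continuous_apply i).pow 2) continuous_const
  have hSbdd : Bornology.IsBounded S := by
    refine (Metric.isBounded_iff_subset_closedBall 0).mpr ⟨1, fun v hv => ?_⟩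
    simp only [Metric.mem_closedBall, dist_zero_right]
    rw [pi_norm_le_iff_of_nonneg zero_le_one]
    intro i
    rw [Real.norm_eq_abs, ← Real.sqrt_one]
    apply Real.abs_le_sqrt
    nlinarith [Finset.single_le_sum (f := fun i => v i ^ 2)
      (fun i _ => sq_nonneg (v i)) (Finset.mem_univ i), hv.out]
  have hScompact : IsCompact S := Metric.isCompact_of_isClosed_isBounded hSclosed hSbdd
  have hSne : S.Nonempty := by
    refine ⟨Pi.single ⟨0, hg⟩ 1, ?_⟩
    simp only [hS, Set.mem_setOf_eq]
    rw [Finset.sum_eq_single ⟨0, hg⟩]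
    · simp
    · intro b _ hb; simp [Pi.single_apply, hb]
    · simp
  obtain ⟨v₀, hv₀S, hmin⟩ := hScompact.exists_isMinOn hSne hQcont.continuousOn
  have hv₀ne : v₀ ≠ 0 := by
    intro h
    have := hv₀S.out
    simp [h] at this
  refine ⟨Q v₀, by simpa using hY.dotProduct_mulVec_pos hv₀ne, fun v => ?_⟩
  by_cases hv : v = 0
  · simp [hv, hQ]
  · set r : ℝ := Real.sqrt (∑ i, v i ^ 2) with hr
    have hsum_pos : 0 < ∑ i, v i ^ 2 := by
      have : ∃ i, v i ≠ 0 := by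
        by_contra h; push_neg at h; exact hv (funext h)
      obtain ⟨i, hi⟩ := this
      have h2 : 0 < v i ^ 2 := by positivity
      exact lt_of_lt_of_le h2 (Finset.single_le_sum (f := fun i => v i ^ 2)
        (fun i _ => sq_nonneg (v i)) (Finset.mem_univ i))
    have hrpos : 0 < r := Real.sqrt_pos.mpr hsum_pos
    have hr2 : r ^ 2 = ∑ i, v i ^ 2 := Real.sq_sqrt hsum_pos.le
    have hmem : r⁻¹ • v ∈ S := by
      simp only [hS, Set.mem_setOf_eq, Pi.smul_apply, smul_eq_mul, mul_pow, ← Finset.mul_sum]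
      rw [← hr2]
      field_simp
    have hQsmul : Q (r⁻¹ • v) = r⁻¹ ^ 2 * Q v := by
      simp only [hQ, smul_dotProduct, mulVec_smul, dotProduct_smul, smul_eq_mul]
      ring
    have h1 : Q v₀ ≤ Q (r⁻¹ • v) := hmin hmem
    rw [hQsmul] at h1
    have h2 : Q v₀ * r ^ 2 ≤ Q v := by
      have this := h1
      calc Q v₀ * r ^ 2 ≤ r⁻¹ ^ 2 * Q v * r ^ 2 := by nlinarith [sq_nonneg r]
        _ = Q v := by field_simp
    calc Q v₀ * ∑ i, v i ^ 2 = Q v₀ * r ^ 2 := by rw [hr2]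
      _ ≤ Q v := h2

/-- Summability of finite products over `ℤ^g` of summable nonnegative functions. -/
lemma summable_pi_prod : ∀ {g : ℕ} (f : Fin g → ℤ → ℝ), (∀ i n, 0 ≤ f i n) →
    (∀ i, Summable (f i)) → Summable (fun m : Fin g → ℤ => ∏ i, f i (m i)) := by
  intro g
  induction g with
  | zero =>
    intro f _ _
    exact (hasSum_fintype _).summable
  | succ n ih =>
    intro f h0 hf
    have htail : Summable (fun m : Fin n → ℤ => ∏ i, f i.succ (m i)) :=
      ih (fun i => f i.succ) (fun i k => h0 _ k) (fun i => hf i.succ)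
    have key : Summable (fun p : ℤ × (Fin n → ℤ) =>
        f 0 p.1 * ∏ i : Fin n, f i.succ (p.2 i)) := by
      apply Summable.mul_of_nonneg (hf 0) htail (fun k => h0 0 k)
      exact fun m => Finset.prod_nonneg fun i _ => h0 _ _
    have := ((Fin.consEquiv fun _ : Fin (n + 1) => ℤ).symm.summable_iff (f := fun p : ℤ × (Fin n → ℤ) =>
        f 0 p.1 * ∏ i : Fin n, f i.succ (p.2 i))).mpr key
    refine this.congr fun m => ?_
    simp [Fin.consEquiv, Fin.prod_univ_succ, Fin.tail]

lemma normY_sq {g : ℕ} (Y : Matrix (Fin g) (Fin g) ℝ) (hY : Y.PosDef) (v : Fin g → ℝ) :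
    normY Y v ^ 2 = v ⬝ᵥ Y.mulVec v :=
  Real.sq_sqrt (hY.posSemidef.dotProduct_mulVec_nonneg v)

/-- The Gaussian series over the lattice is summable for `t > 0`. -/
lemma summable_gauss {g : ℕ} (hg : 1 ≤ g) (Y : Matrix (Fin g) (Fin g) ℝ) (hY : Y.PosDef)
    (x : Fin g → ℝ) {t : ℝ} (ht : 0 < t) :
    Summable fun m : Fin g → ℤ => Real.exp (-π * t * normY Y (x - coeZ m) ^ 2) := by
  obtain ⟨c, hc, hcle⟩ := quadform_lower hg Y hY
  have hF : ∀ i : Fin g, Summable (fun n : ℤ => Real.exp (-π * (t * c) * (x i - n) ^ 2)) := by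
    intro i
    refine (HurwitzKernelBounds.summable_f_int 0 (-x i) (mul_pos ht hc)).congr fun n => ?_
    simp only [HurwitzKernelBounds.f_int, pow_zero, one_mul]
    congr 1
    ring
  refine Summable.of_nonneg_of_le (fun m => (Real.exp_pos _).le) (fun m => ?_)
    (summable_pi_prod (fun i n => Real.exp (-π * (t * c) * (x i - n) ^ 2))
      (fun i n => (Real.exp_pos _).le) hF)
  calc Real.exp (-π * t * normY Y (x - coeZ m) ^ 2)
      ≤ Real.exp (∑ i, -π * (t * c) * (x i - (m i : ℝ)) ^ 2) := ?_
    _ = ∏ i, Real.exp (-π * (t * c) * (x i - (m i : ℝ)) ^ 2) :=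
        Real.exp_sum Finset.univ _
  rw [normY_sq Y hY]
  apply Real.exp_le_exp.mpr
  have h1 : c * ∑ i, ((x - coeZ m) i) ^ 2 ≤ (x - coeZ m) ⬝ᵥ Y.mulVec (x - coeZ m) :=
    hcle (x - coeZ m)
  have h2 : ∑ i, -π * (t * c) * (x i - (m i : ℝ)) ^ 2
      = -(π * t) * (c * ∑ i, ((x - coeZ m) i) ^ 2) := by
    simp only [Finset.mul_sum, Pi.sub_apply, coeZ]
    refine Finset.sum_congr rfl fun i _ => ?_
    ring
  rw [h2]
  have hπt : (0:ℝ) ≤ π * t := by positivity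
  nlinarith
theorem fY_antitone {g : ℕ} (hg : 1 ≤ g) (Y : Matrix (Fin g) (Fin g) ℝ)
    (hsymm : Y.IsSymm) (hY : Y.PosDef) (x : Fin g → ℝ) :
    AntitoneOn (fun t => fY Y t x * Real.exp (π * t * psi Y x ^ 2)) (Set.Ioi 0) := by
  intro a ha b hb hab
  simp only [Set.mem_Ioi] at ha hb
  set ψ : ℝ := psi Y x with hψ
  have hψ0 : 0 ≤ ψ := Real.iInf_nonneg fun m => Real.sqrt_nonneg _
  have hbdd : BddBelow (Set.range fun m : Fin g → ℤ => normY Y (x - coeZ m)) := by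
    refine ⟨0, ?_⟩
    rintro _ ⟨m, rfl⟩
    exact Real.sqrt_nonneg _
  have hψle : ∀ m : Fin g → ℤ, ψ ≤ normY Y (x - coeZ m) := fun m => ciInf_le hbdd m
  have hψ2 : ∀ m : Fin g → ℤ, ψ ^ 2 ≤ normY Y (x - coeZ m) ^ 2 := fun m =>
    pow_le_pow_left₀ hψ0 (hψle m) 2
  -- rewrite both sides
  have key : ∀ u : ℝ, fY Y u x * Real.exp (π * u * ψ ^ 2)
      = Real.sqrt Y.det *
        ∑' m : Fin g → ℤ, Real.exp (π * u * (ψ ^ 2 - normY Y (x - coeZ m) ^ 2)) := by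
    intro u
    rw [fY, mul_assoc, ← tsum_mul_right]
    congr 1
    refine tsum_congr fun m => ?_
    rw [← Real.exp_add]
    congr 1
    ring
  simp only [key]
  have hsummA : Summable fun m : Fin g → ℤ =>
      Real.exp (π * a * (ψ ^ 2 - normY Y (x - coeZ m) ^ 2)) := by
    refine ((summable_gauss hg Y hY x ha).mul_left (Real.exp (π * a * ψ ^ 2))).congr fun m => ?_
    rw [← Real.exp_add]
    congr 1
    ring
  have hterm : ∀ m : Fin g → ℤ,
      Real.exp (π * b * (ψ ^ 2 - normY Y (x - coeZ m) ^ 2))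
        ≤ Real.exp (π * a * (ψ ^ 2 - normY Y (x - coeZ m) ^ 2)) := by
    intro m
    apply Real.exp_le_exp.mpr
    have hd : ψ ^ 2 - normY Y (x - coeZ m) ^ 2 ≤ 0 := by linarith [hψ2 m]
    have h3 := mul_le_mul_of_nonpos_right
      (mul_le_mul_of_nonneg_left hab Real.pi_pos.le) hd
    linarith
  have hsummB : Summable fun m : Fin g → ℤ =>
      Real.exp (π * b * (ψ ^ 2 - normY Y (x - coeZ m) ^ 2)) :=
    Summable.of_nonneg_of_le (fun m => (Real.exp_pos _).le) hterm hsummA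
  exact mul_le_mul_of_nonneg_left (Summable.tsum_le_tsum hterm hsummB hsummA) (Real.sqrt_nonneg _)
end
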